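/- Let I be a closed, proper ideal of F, let φ be the F-filter on X generated by B(I), and let f ∈ F. The following statements are equivalent: (i) f ∈ I; (ii) f̂(p) = 0 for every p ∈ φ̂, where f̂ is the unique continuous function δX → ℂ with f = f̂ ∘ e; (iii) X(f,r) ∈ φ for every r > 0. -/

import Mathlib

open Set

variable {X : Type*} [Nonempty X] [TopologicalSpace X] [DiscreteTopology X]

/-- The set `X(f,r) = {x ∈ X : |f(x)| ≤ r}`. -/
def XSet (f : BoundedContinuousFunction X ℂ) (r : ℝ) : Set X := {x | ‖f x‖ ≤ r}

/-- An `F`-family on `X`: a nonempty collection of nonempty subsets of `X` such that for every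
member `A ≠ X` there are `B` in the collection and `f ∈ F` with `f(B) = {0}`,
`f(X \ A) = {1}`. -/
def FFamily (F : StarSubalgebra ℂ (BoundedContinuousFunction X ℂ)) (𝒜 : Set (Set X)) : Prop :=
  𝒜.Nonempty ∧ (∀ A ∈ 𝒜, A.Nonempty) ∧
    ∀ A ∈ 𝒜, A ≠ Set.univ →
      ∃ B ∈ 𝒜, ∃ f ∈ F, (∀ x ∈ B, f x = 0) ∧ ∀ x ∉ A, f x = 1

/-- A filter on the set `X`, viewed as a collection of subsets. -/
def IsSetFilter (φ : Set (Set X)) : Prop :=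
  φ.Nonempty ∧ (∀ A ∈ φ, ∀ B ∈ φ, A ∩ B ∈ φ) ∧
    (∀ A ∈ φ, ∀ B : Set X, A ⊆ B → B ∈ φ) ∧ ∅ ∉ φ

/-- An `F`-filter on `X` is a filter which is also an `F`-family. -/
def FFilter (F : StarSubalgebra ℂ (BoundedContinuousFunction X ℂ)) (φ : Set (Set X)) : Prop :=
  IsSetFilter φ ∧ FFamily F φ

/-- An `F`-ultrafilter on `X` is an `F`-filter maximal with respect to inclusion. -/
def FUltrafilter (F : StarSubalgebra ℂ (BoundedContinuousFunction X ℂ)) (φ : Set (Set X)) : Prop :=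
  FFilter F φ ∧ ∀ ψ : Set (Set X), FFilter F ψ → φ ⊆ ψ → ψ = φ

/-- `F₀ = {f ∈ F : X(f,r) ≠ ∅ for all r > 0}`. -/
def FZero (F : StarSubalgebra ℂ (BoundedContinuousFunction X ℂ)) :
    Set (BoundedContinuousFunction X ℂ) :=
  {f | f ∈ F ∧ ∀ r : ℝ, 0 < r → (XSet f r).Nonempty}

/-- `Z(A) = {f ∈ F : f(x) = 0 for all x ∈ A}`. -/
def ZSet (F : StarSubalgebra ℂ (BoundedContinuousFunction X ℂ)) (A : Set X) :
    Set (BoundedContinuousFunction X ℂ) :=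
  {f | f ∈ F ∧ ∀ x ∈ A, f x = 0}

/-- The finite intersection property. -/
def FIP (𝒜 : Set (Set X)) : Prop :=
  ∀ s : Finset (Set X), ↑s ⊆ 𝒜 → s.Nonempty → (⋂₀ (s : Set (Set X))).Nonempty

/-- A filter base on `X`. -/
def IsFilterBase (ℬ : Set (Set X)) : Prop :=
  ℬ.Nonempty ∧ ∅ ∉ ℬ ∧ ∀ A ∈ ℬ, ∀ B ∈ ℬ, ∃ C ∈ ℬ, C ⊆ A ∩ B

/-- The filter generated by a filter base. -/
def genFilter (ℬ : Set (Set X)) : Set (Set X) :=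
  {A | ∃ B ∈ ℬ, B ⊆ A}

/-- `δX`, the space of all `F`-ultrafilters on `X`. -/
def Delta (F : StarSubalgebra ℂ (BoundedContinuousFunction X ℂ)) : Type _ :=
  {p : Set (Set X) // FUltrafilter F p}

/-- `Â = {p ∈ δX : A ∈ p}`. -/
def hatSet (F : StarSubalgebra ℂ (BoundedContinuousFunction X ℂ)) (A : Set X) :
    Set (Delta F) :=
  {p | A ∈ p.1}

/-- The topology on `δX` having `{Â : A ⊆ X}` as a base. -/
instance (F : StarSubalgebra ℂ (BoundedContinuousFunction X ℂ)) :
    TopologicalSpace (Delta F) :=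
  TopologicalSpace.generateFrom {S | ∃ A : Set X, S = hatSet F A}

/-- For an `F`-filter `φ`, `φ̂ = {p ∈ δX : φ ⊆ p}`. -/
def hatF (F : StarSubalgebra ℂ (BoundedContinuousFunction X ℂ)) (φ : Set (Set X)) :
    Set (Delta F) :=
  {p | φ ⊆ p.1}

/-- `τ(F)`, the weakest topology on `X` making every member of `F` continuous. -/
noncomputable def tauF (F : StarSubalgebra ℂ (BoundedContinuousFunction X ℂ)) : TopologicalSpace X :=
  ⨅ f ∈ (F : Set (BoundedContinuousFunction X ℂ)),
    TopologicalSpace.induced (fun x => f x) inferInstance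

/-- `B(I) = {X(f,r) : f ∈ I, r > 0}` for an ideal `I` of `F`. -/
def BIdeal (F : StarSubalgebra ℂ (BoundedContinuousFunction X ℂ)) (I : Ideal F) :
    Set (Set X) :=
  {S | ∃ f ∈ I, ∃ r : ℝ, 0 < r ∧ S = XSet (f : BoundedContinuousFunction X ℂ) r}

section Aux

open Polynomial BoundedContinuousFunction TopologicalSpace Metric

variable {X : Type*} [Nonempty X] [TopologicalSpace X] [DiscreteTopology X]

/-- evaluation as an algebra hom on bounded continuous functions -/
noncomputable def auxEv (x : X) : BoundedContinuousFunction X ℂ →ₐ[ℂ] ℂ where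
  toFun u := u x
  map_one' := rfl
  map_mul' _ _ := rfl
  map_zero' := rfl
  map_add' _ _ := rfl
  commutes' _ := rfl

theorem aux_comp_mem (F : StarSubalgebra ℂ (BoundedContinuousFunction X ℂ))
    (hF : IsClosed (F : Set (BoundedContinuousFunction X ℂ)))
    {f : BoundedContinuousFunction X ℂ} (hf : f ∈ F) (c : ℂ) (ψ : C(ℝ, ℝ))
    {v : BoundedContinuousFunction X ℂ} (hv : ∀ x, v x = ((ψ (‖f x - c‖ ^ 2) : ℝ) : ℂ)) :
    v ∈ F := by
  set d : BoundedContinuousFunction X ℂ := f - algebraMap ℂ _ c with hd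
  have hdF : d ∈ F := sub_mem hf (algebraMap_mem F c)
  set a : BoundedContinuousFunction X ℂ := star d * d with ha
  have haF : a ∈ F := mul_mem (star_mem hdF) hdF
  have hdval : ∀ x, d x = f x - c := by intro x; simp [hd]
  have haval : ∀ x, a x = ((‖f x - c‖ ^ 2 : ℝ) : ℂ) := by
    intro x
    have : a x = (starRingEnd ℂ) (d x) * d x := by simp [ha]
    rw [this, hdval x, Complex.conj_mul']
    push_cast
    ring
  -- all values of `‖f x - c‖^2` lie in `[0, M]`
  set M : ℝ := ‖a‖ with hM
  have hM0 : 0 ≤ M := norm_nonneg a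
  have hmem : ∀ x : X, ‖f x - c‖ ^ 2 ∈ Set.Icc (0 : ℝ) M := by
    intro x
    refine ⟨by positivity, ?_⟩
    have := a.norm_coe_le_norm x
    rwa [haval x, Complex.norm_real, Real.norm_eq_abs, abs_of_nonneg (by positivity)] at this
  -- Weierstrass approximation
  have hW := polynomialFunctions_closure_eq_top 0 M
  set t0 : C(Set.Icc (0:ℝ) M, ℝ) := ψ.restrict (Set.Icc (0:ℝ) M) with ht0
  have ht0mem : t0 ∈ (polynomialFunctions (Set.Icc (0:ℝ) M)).topologicalClosure := by
    rw [hW]; trivial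
  have ht0cl : t0 ∈ closure ((polynomialFunctions (Set.Icc (0:ℝ) M)) :
      Set C(Set.Icc (0:ℝ) M, ℝ)) := ht0mem
  suffices hcl : v ∈ closure (F : Set (BoundedContinuousFunction X ℂ)) by
    rw [hF.closure_eq] at hcl; exact hcl
  rw [Metric.mem_closure_iff]
  intro ε hε
  obtain ⟨q, hq, hdq⟩ := Metric.mem_closure_iff.1 ht0cl ε hε
  rw [SetLike.mem_coe, polynomialFunctions, Subalgebra.mem_map] at hq
  obtain ⟨p, -, rfl⟩ := hq
  -- the candidate approximation
  set b : BoundedContinuousFunction X ℂ :=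
    Polynomial.aeval a (p.map (algebraMap ℝ ℂ)) with hb
  have hbF : b ∈ F := by
    have : b = F.toSubalgebra.val (Polynomial.aeval (⟨a, haF⟩ : F.toSubalgebra)
        (p.map (algebraMap ℝ ℂ))) := by
      rw [← Polynomial.aeval_algHom_apply]; rfl
    rw [this]
    exact (Polynomial.aeval (⟨a, haF⟩ : F.toSubalgebra) (p.map (algebraMap ℝ ℂ))).2
  refine ⟨b, hbF, ?_⟩
  have hbval : ∀ x : X, b x = ((p.eval (‖f x - c‖ ^ 2) : ℝ) : ℂ) := by
    intro x
    have h1 : b x = auxEv x (Polynomial.aeval a (p.map (algebraMap ℝ ℂ))) := rfl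
    rw [h1, ← Polynomial.aeval_algHom_apply]
    have h2 : auxEv x a = a x := rfl
    rw [h2, haval x, Polynomial.aeval_map_algebraMap]
    have h3 : ((‖f x - c‖ ^ 2 : ℝ) : ℂ) = algebraMap ℝ ℂ (‖f x - c‖ ^ 2) := rfl
    rw [h3, Polynomial.aeval_algebraMap_apply]
    norm_num
  have hle : dist v b ≤ dist t0 (Polynomial.toContinuousMapOnAlgHom _ p) := by
    rw [BoundedContinuousFunction.dist_le dist_nonneg]
    intro x
    rw [hv x, hbval x, Complex.isometry_ofReal.dist_eq]
    have := ContinuousMap.dist_apply_le_dist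
      (f := t0) (g := Polynomial.toContinuousMapOnAlgHom _ p) ⟨_, hmem x⟩
    convert this using 2 <;> rfl
  exact lt_of_le_of_lt hle hdq

/-- ramp function as a continuous map -/
noncomputable def auxStep (α β : ℝ) : C(ℝ, ℝ) :=
  ⟨fun t => min 1 (max 0 ((t - α) / (β - α))), by fun_prop⟩

theorem auxStep_apply (α β t : ℝ) : auxStep α β t = min 1 (max 0 ((t - α) / (β - α))) := rfl

theorem auxStep_abs (α β t : ℝ) : |auxStep α β t| ≤ 1 := by
  rw [auxStep_apply]
  have h0 : (0:ℝ) ≤ max 0 ((t - α) / (β - α)) := le_max_left _ _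
  have : (0:ℝ) ≤ min 1 (max 0 ((t - α) / (β - α))) := le_min zero_le_one h0
  rw [abs_of_nonneg this]
  exact min_le_left _ _

theorem auxStep_eq_zero {α β t : ℝ} (hαβ : α < β) (h : t ≤ α) : auxStep α β t = 0 := by
  have h1 : (t - α) / (β - α) ≤ 0 :=
    div_nonpos_iff.2 (Or.inr ⟨by linarith, by linarith⟩)
  rw [auxStep_apply, max_eq_left h1, min_eq_right zero_le_one]

theorem auxStep_eq_one {α β t : ℝ} (hαβ : α < β) (h : β ≤ t) : auxStep α β t = 1 := by
  have h1 : (1:ℝ) ≤ (t - α) / (β - α) := (one_le_div (by linarith)).2 (by linarith)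
  rw [auxStep_apply, max_eq_right (le_trans zero_le_one h1), min_eq_left h1]

/-- bump vanishing near `c`, equal to one far from `c` -/
theorem aux_bump0 (F : StarSubalgebra ℂ (BoundedContinuousFunction X ℂ))
    (hF : IsClosed (F : Set (BoundedContinuousFunction X ℂ)))
    {f : BoundedContinuousFunction X ℂ} (hf : f ∈ F) (c : ℂ) {α β : ℝ} (hαβ : α < β) :
    ∃ v : BoundedContinuousFunction X ℂ, v ∈ F ∧
      (∀ x, ‖f x - c‖ ^ 2 ≤ α → v x = 0) ∧ (∀ x, β ≤ ‖f x - c‖ ^ 2 → v x = 1) := by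
  set v : BoundedContinuousFunction X ℂ :=
    BoundedContinuousFunction.ofNormedAddCommGroup
      (fun x => ((auxStep α β (‖f x - c‖ ^ 2) : ℝ) : ℂ))
      (continuous_of_discreteTopology) 1
      (fun x => by rw [Complex.norm_real, Real.norm_eq_abs]; exact auxStep_abs _ _ _) with hv
  have hval : ∀ x, v x = ((auxStep α β (‖f x - c‖ ^ 2) : ℝ) : ℂ) := fun x => rfl
  refine ⟨v, aux_comp_mem F hF hf c (auxStep α β) hval, ?_, ?_⟩
  · intro x hx; rw [hval x, auxStep_eq_zero hαβ hx]; norm_num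
  · intro x hx; rw [hval x, auxStep_eq_one hαβ hx]; norm_num

/-- bump equal to one near `c`, vanishing far from `c` -/
theorem aux_bump1 (F : StarSubalgebra ℂ (BoundedContinuousFunction X ℂ))
    (hF : IsClosed (F : Set (BoundedContinuousFunction X ℂ)))
    {f : BoundedContinuousFunction X ℂ} (hf : f ∈ F) (c : ℂ) {α β : ℝ} (hαβ : α < β) :
    ∃ v : BoundedContinuousFunction X ℂ, v ∈ F ∧
      (∀ x, β ≤ ‖f x - c‖ ^ 2 → v x = 0) ∧ (∀ x, ‖f x - c‖ ^ 2 ≤ α → v x = 1) := by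
  set ψ : C(ℝ, ℝ) := ⟨fun t => 1 - auxStep α β t, by fun_prop⟩ with hψ
  set v : BoundedContinuousFunction X ℂ :=
    BoundedContinuousFunction.ofNormedAddCommGroup
      (fun x => ((ψ (‖f x - c‖ ^ 2) : ℝ) : ℂ))
      (continuous_of_discreteTopology) 2
      (fun x => by
        rw [Complex.norm_real, Real.norm_eq_abs]
        have := auxStep_abs α β (‖f x - c‖ ^ 2)
        show |1 - auxStep α β (‖f x - c‖ ^ 2)| ≤ 2
        rw [abs_le] at this ⊢; constructor <;> linarith [this.1, this.2]) with hv
  have hval : ∀ x, v x = ((ψ (‖f x - c‖ ^ 2) : ℝ) : ℂ) := fun x => rfl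
  refine ⟨v, aux_comp_mem F hF hf c ψ hval, ?_, ?_⟩
  · intro x hx
    rw [hval x]
    show ((1 - auxStep α β (‖f x - c‖ ^ 2) : ℝ) : ℂ) = 0
    rw [auxStep_eq_one hαβ hx]; norm_num
  · intro x hx
    rw [hval x]
    show ((1 - auxStep α β (‖f x - c‖ ^ 2) : ℝ) : ℂ) = 1
    rw [auxStep_eq_zero hαβ hx]; norm_num

/-- combination of two witnesses -/
theorem aux_combine (F : StarSubalgebra ℂ (BoundedContinuousFunction X ℂ))
    {u v : BoundedContinuousFunction X ℂ} (hu : u ∈ F) (hv : v ∈ F) :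
    ∃ w : BoundedContinuousFunction X ℂ, w ∈ F ∧
      (∀ x, u x = 0 → v x = 0 → w x = 0) ∧ (∀ x, u x = 1 ∨ v x = 1 → w x = 1) := by
  refine ⟨u + v - u * v, sub_mem (add_mem hu hv) (mul_mem hu hv), ?_, ?_⟩
  · intro x h1 h2
    simp [BoundedContinuousFunction.coe_sub, BoundedContinuousFunction.coe_add, h1, h2]
  · rintro x (h | h) <;>
      · simp only [BoundedContinuousFunction.coe_sub, BoundedContinuousFunction.coe_add,
          BoundedContinuousFunction.coe_mul, Pi.sub_apply, Pi.add_apply, Pi.mul_apply, h]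
        ring

section Filters

variable {F : StarSubalgebra ℂ (BoundedContinuousFunction X ℂ)}

theorem aux_univ_mem {p : Set (Set X)} (hp : IsSetFilter p) : Set.univ ∈ p := by
  obtain ⟨A, hA⟩ := hp.1
  exact hp.2.2.1 A hA Set.univ (Set.subset_univ A)

theorem aux_finite_inter {p : Set (Set X)} (hp : IsSetFilter p) {ι : Type*} [DecidableEq ι]
    (t : Finset ι) (A : ι → Set X) (h : ∀ i ∈ t, A i ∈ p) : (⋂ i ∈ t, A i) ∈ p := by
  induction t using Finset.induction with
  | empty => simpa using aux_univ_mem hp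
  | @insert a s hni ih =>
    rw [Finset.set_biInter_insert]
    exact hp.2.1 _ (h a (Finset.mem_insert_self a s)) _
      (ih fun i hi => h i (Finset.mem_insert_of_mem hi))

theorem aux_exists_ultra {ψ : Set (Set X)} (hψ : FFilter F ψ) :
    ∃ p, FUltrafilter F p ∧ ψ ⊆ p := by
  have hzorn : ∀ c ⊆ {χ : Set (Set X) | FFilter F χ}, IsChain (fun x1 x2 => x1 ⊆ x2) c →
      c.Nonempty → ∃ ub ∈ {χ : Set (Set X) | FFilter F χ}, ∀ s ∈ c, s ⊆ ub := by
    intro c hc hchain hne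
    obtain ⟨χ0, hχ0⟩ := hne
    have h0 : FFilter F χ0 := hc hχ0
    refine ⟨⋃₀ c, ⟨⟨?_, ?_, ?_, ?_⟩, ?_, ?_, ?_⟩, fun s hs => Set.subset_sUnion_of_mem hs⟩
    · obtain ⟨A, hA⟩ := h0.1.1
      exact ⟨A, Set.mem_sUnion_of_mem hA hχ0⟩
    · rintro A ⟨χ1, hχ1, hA⟩ B ⟨χ2, hχ2, hB⟩
      rcases hchain.total hχ1 hχ2 with h | h
      · exact Set.mem_sUnion_of_mem ((hc hχ2).1.2.1 A (h hA) B hB) hχ2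
      · exact Set.mem_sUnion_of_mem ((hc hχ1).1.2.1 A hA B (h hB)) hχ1
    · rintro A ⟨χ1, hχ1, hA⟩ B hAB
      exact Set.mem_sUnion_of_mem ((hc hχ1).1.2.2.1 A hA B hAB) hχ1
    · rintro ⟨χ1, hχ1, hA⟩
      exact (hc hχ1).1.2.2.2 hA
    · obtain ⟨A, hA⟩ := h0.1.1
      exact ⟨A, Set.mem_sUnion_of_mem hA hχ0⟩
    · rintro A ⟨χ1, hχ1, hA⟩
      exact (hc hχ1).2.2.1 A hA
    · rintro A ⟨χ1, hχ1, hA⟩ hAne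
      obtain ⟨B, hB, g, hgF, h0g, h1g⟩ := (hc hχ1).2.2.2 A hA hAne
      exact ⟨B, Set.mem_sUnion_of_mem hB hχ1, g, hgF, h0g, h1g⟩
  obtain ⟨m, hsub, hmax⟩ := zorn_subset_nonempty {χ : Set (Set X) | FFilter F χ} hzorn ψ hψ
  exact ⟨m, ⟨hmax.1, fun χ hχ hmχ => subset_antisymm (hmax.2 hχ hmχ) hmχ⟩, hsub⟩

theorem aux_tauF_continuous {u : BoundedContinuousFunction X ℂ} (hu : u ∈ F) :
    @Continuous X ℂ (tauF F) _ (fun y => u y) := by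
  unfold tauF
  exact continuous_iInf_dom (i := u) (continuous_iInf_dom (i := hu) continuous_induced_dom)

theorem aux_open_mem_nhds {W : Type*} (tau : TopologicalSpace W) {V A : Set W} {x : W}
    (hV : @IsOpen W tau V) (hxV : x ∈ V) (hVA : V ⊆ A) : A ∈ @nhds W tau x := by
  letI := tau
  exact Filter.mem_of_superset (hV.mem_nhds hxV) hVA

theorem aux_cont_preimage_open {W : Type*} (tau : TopologicalSpace W) {g : W → ℂ}
    (hg : @Continuous W ℂ tau _ g) (s : Set ℂ) (hs : IsOpen s) : @IsOpen W tau (g ⁻¹' s) := by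
  letI := tau
  exact hg.isOpen_preimage s hs

theorem aux_isOpen_hatSet (A : Set X) : IsOpen (hatSet F A) :=
  TopologicalSpace.isOpen_generateFrom_of_mem ⟨A, rfl⟩

theorem aux_basis :
    TopologicalSpace.IsTopologicalBasis {S : Set (Delta F) | ∃ A : Set X, S = hatSet F A} := by
  refine ⟨?_, ?_, rfl⟩
  · rintro t1 ⟨A, rfl⟩ t2 ⟨B, rfl⟩ p ⟨hpA, hpB⟩
    refine ⟨hatSet F (A ∩ B), ⟨A ∩ B, rfl⟩, p.2.1.1.2.1 A hpA B hpB, ?_⟩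
    rintro q hq
    exact ⟨q.2.1.1.2.2.1 _ hq A Set.inter_subset_left,
      q.2.1.1.2.2.1 _ hq B Set.inter_subset_right⟩
  · refine Set.eq_univ_of_forall fun p => ?_
    exact Set.mem_sUnion_of_mem (aux_univ_mem p.2.1.1) ⟨Set.univ, rfl⟩

end Filters

section Lim

variable {F : StarSubalgebra ℂ (BoundedContinuousFunction X ℂ)}

theorem aux_exists_lim (hF : IsClosed (F : Set (BoundedContinuousFunction X ℂ)))
    {p : Set (Set X)} (hp : FUltrafilter F p) {f : BoundedContinuousFunction X ℂ}
    (hf : f ∈ F) :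
    ∃ c : ℂ, ∀ ε : ℝ, 0 < ε → {x : X | ‖f x - c‖ ≤ ε} ∈ p := by
  classical
  -- step 1 : a cluster point exists
  have hcl : ∃ c : ℂ, ∀ ε : ℝ, 0 < ε → ∀ A ∈ p, ∃ x ∈ A, ‖f x - c‖ ≤ ε := by
    by_contra hno
    push_neg at hno
    choose ε hε A hA hfar using hno
    have hcov : Metric.closedBall (0:ℂ) ‖f‖ ⊆ ⋃ c : ℂ, Metric.ball c (ε c) :=
      fun z _ => Set.mem_iUnion.2 ⟨z, Metric.mem_ball_self (hε z)⟩
    obtain ⟨t, ht⟩ := (isCompact_closedBall (0:ℂ) ‖f‖).elim_finite_subcover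
      (fun c : ℂ => Metric.ball c (ε c)) (fun c => Metric.isOpen_ball) hcov
    have hint : (⋂ c ∈ t, A c) ∈ p := aux_finite_inter hp.1.1 t A (fun c _ => hA c)
    obtain ⟨x, hx⟩ := hp.1.2.2.1 _ hint
    have hfx : f x ∈ Metric.closedBall (0:ℂ) ‖f‖ := by
      rw [Metric.mem_closedBall, dist_zero_right]
      exact f.norm_coe_le_norm x
    obtain ⟨c, hct, hcb⟩ := Set.mem_iUnion₂.1 (ht hfx)
    have hxA : x ∈ A c := by
      have := Set.mem_iInter₂.1 hx c hct
      exact this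
    have h1 := hfar c x hxA
    rw [Metric.mem_ball] at hcb
    rw [Complex.dist_eq] at hcb
    have : ‖f x - c‖ ≤ ε c := le_of_lt (by simpa using hcb)
    linarith
  obtain ⟨c, hc⟩ := hcl
  set D : ℝ → Set X := fun ε => {x : X | ‖f x - c‖ ≤ ε} with hD
  set ℬ : Set (Set X) := {S | ∃ A ∈ p, ∃ ε : ℝ, 0 < ε ∧ S = A ∩ D ε} with hℬ
  have hgenne : ∀ S ∈ ℬ, S.Nonempty := by
    rintro S ⟨A, hA, ε, hε, rfl⟩
    obtain ⟨x, hx, hxd⟩ := hc ε hε A hA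
    exact ⟨x, hx, hxd⟩
  have hone : ∀ S ∈ ℬ, S ∈ genFilter ℬ := fun S hS => ⟨S, hS, subset_rfl⟩
  have hψ : FFilter F (genFilter ℬ) := by
    constructor
    · refine ⟨⟨Set.univ ∩ D 1, hone _ ⟨Set.univ, aux_univ_mem hp.1.1, 1, one_pos, rfl⟩⟩, ?_, ?_, ?_⟩
      · rintro T ⟨S, ⟨A, hA, ε, hε, rfl⟩, hTS⟩ T' ⟨S', ⟨A', hA', ε', hε', rfl⟩, hTS'⟩
        refine ⟨(A ∩ A') ∩ D (min ε ε'),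
          ⟨A ∩ A', hp.1.1.2.1 A hA A' hA', min ε ε', lt_min hε hε', rfl⟩, ?_⟩
        rintro x ⟨⟨hxA, hxA'⟩, hxD⟩
        have hxD' : ‖f x - c‖ ≤ min ε ε' := hxD
        exact ⟨hTS ⟨hxA, le_trans hxD' (min_le_left _ _)⟩,
          hTS' ⟨hxA', le_trans hxD' (min_le_right _ _)⟩⟩
      · rintro T ⟨S, hS, hTS⟩ B hTB
        exact ⟨S, hS, hTS.trans hTB⟩
      · rintro ⟨S, hS, hTS⟩
        obtain ⟨x, hx⟩ := hgenne S hS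
        exact (hTS hx)
    · refine ⟨⟨Set.univ ∩ D 1, hone _ ⟨Set.univ, aux_univ_mem hp.1.1, 1, one_pos, rfl⟩⟩, ?_, ?_⟩
      · rintro T ⟨S, hS, hTS⟩
        obtain ⟨x, hx⟩ := hgenne S hS
        exact ⟨x, hTS hx⟩
      · rintro T ⟨S, ⟨A, hA, ε, hε, rfl⟩, hTS⟩ hTne
        have hw : ∃ B ∈ p, ∃ u, u ∈ F ∧ (∀ x ∈ B, u x = 0) ∧ (∀ x ∉ A, u x = 1) := by
          by_cases hAu : A = Set.univ
          · exact ⟨Set.univ, aux_univ_mem hp.1.1, 0, zero_mem F, fun x _ => rfl,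
              fun x hx => absurd (Set.mem_univ x) (hAu ▸ hx)⟩
          · obtain ⟨B, hB, u, huF, h0, h1⟩ := hp.1.2.2.2 A hA hAu
            exact ⟨B, hB, u, huF, h0, h1⟩
        obtain ⟨B, hB, u, huF, hu0, hu1⟩ := hw
        obtain ⟨v, hvF, hv0, hv1⟩ := aux_bump0 F hF hf c
          (show (ε/2)^2 < ε^2 by nlinarith)
        obtain ⟨w, hwF, hw0, hw1⟩ := aux_combine F huF hvF
        refine ⟨B ∩ D (ε/2), hone _ ⟨B, hB, ε/2, half_pos hε, rfl⟩, w, hwF, ?_, ?_⟩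
        · rintro x ⟨hxB, hxD⟩
          refine hw0 x (hu0 x hxB) (hv0 x ?_)
          have : ‖f x - c‖ ≤ ε/2 := hxD
          nlinarith [norm_nonneg (f x - c)]
        · intro x hxT
          have hxS : x ∉ A ∩ D ε := fun h => hxT (hTS h)
          rcases Decidable.not_and_iff_or_not.1 hxS with h | h
          · exact hw1 x (Or.inl (hu1 x h))
          · refine hw1 x (Or.inr (hv1 x ?_))
            have : ¬ ‖f x - c‖ ≤ ε := h
            nlinarith [norm_nonneg (f x - c)]
  have hsub : p ⊆ genFilter ℬ := fun A hA =>
    ⟨A ∩ D 1, ⟨A, hA, 1, one_pos, rfl⟩, Set.inter_subset_left⟩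
  have heq := hp.2 _ hψ hsub
  refine ⟨c, fun ε hε => ?_⟩
  rw [← heq]
  exact ⟨Set.univ ∩ D ε, ⟨Set.univ, aux_univ_mem hp.1.1, ε, hε, rfl⟩, Set.inter_subset_right⟩

end Lim

section Fhat

variable (F : StarSubalgebra ℂ (BoundedContinuousFunction X ℂ))

noncomputable def auxFhat (hF : IsClosed (F : Set (BoundedContinuousFunction X ℂ)))
    (f : BoundedContinuousFunction X ℂ) (hf : f ∈ F) : Delta F → ℂ :=
  fun p => (aux_exists_lim hF p.2 hf).choose

theorem auxFhat_spec (hF : IsClosed (F : Set (BoundedContinuousFunction X ℂ)))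
    (f : BoundedContinuousFunction X ℂ) (hf : f ∈ F) (p : Delta F) :
    ∀ ε : ℝ, 0 < ε → {x : X | ‖f x - auxFhat F hF f hf p‖ ≤ ε} ∈ p.1 :=
  (aux_exists_lim hF p.2 hf).choose_spec

theorem auxFhat_cont (hF : IsClosed (F : Set (BoundedContinuousFunction X ℂ)))
    (f : BoundedContinuousFunction X ℂ) (hf : f ∈ F) :
    Continuous (auxFhat F hF f hf) := by
  rw [continuous_iff_continuousAt]
  intro p
  rw [ContinuousAt, Metric.tendsto_nhds]
  intro ε hε
  set D : Set X := {x : X | ‖f x - auxFhat F hF f hf p‖ ≤ ε/4} with hD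
  have hDp : D ∈ p.1 := auxFhat_spec F hF f hf p (ε/4) (by linarith)
  have hopen : IsOpen (hatSet F D) := aux_isOpen_hatSet D
  refine Filter.eventually_of_mem (hopen.mem_nhds hDp) ?_
  intro q hq
  have hDq : {x : X | ‖f x - auxFhat F hF f hf q‖ ≤ ε/4} ∈ q.1 :=
    auxFhat_spec F hF f hf q (ε/4) (by linarith)
  have hint : D ∩ {x : X | ‖f x - auxFhat F hF f hf q‖ ≤ ε/4} ∈ q.1 :=
    q.2.1.1.2.1 _ hq _ hDq
  obtain ⟨x, hx1, hx2⟩ := q.2.1.2.2.1 _ hint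
  have h1 : ‖f x - auxFhat F hF f hf p‖ ≤ ε/4 := hx1
  have h2 : ‖f x - auxFhat F hF f hf q‖ ≤ ε/4 := hx2
  have : dist (auxFhat F hF f hf q) (auxFhat F hF f hf p) ≤ ε/2 := by
    rw [Complex.dist_eq]
    calc ‖auxFhat F hF f hf q - auxFhat F hF f hf p‖
        = ‖(auxFhat F hF f hf q - f x) + (f x - auxFhat F hF f hf p)‖ := by
          rw [sub_add_sub_cancel]
      _ ≤ ‖auxFhat F hF f hf q - f x‖ + ‖f x - auxFhat F hF f hf p‖ := norm_add_le _ _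
      _ ≤ ε/4 + ε/4 := by
          refine add_le_add ?_ h1
          rw [norm_sub_rev]; exact h2
      _ = ε/2 := by ring
  linarith [this]

theorem auxFhat_eval (hF : IsClosed (F : Set (BoundedContinuousFunction X ℂ)))
    (f : BoundedContinuousFunction X ℂ) (hf : f ∈ F)
    (e : X → Delta F) (he : ∀ x : X, (e x).1 = {A : Set X | A ∈ @nhds X (tauF F) x})
    (x : X) : auxFhat F hF f hf (e x) = f x := by
  have key : ∀ ε : ℝ, 0 < ε → ‖f x - auxFhat F hF f hf (e x)‖ ≤ ε := by
    intro ε hε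
    have hD := auxFhat_spec F hF f hf (e x) ε hε
    rw [he x] at hD
    exact @mem_of_mem_nhds X (tauF F) _ _ hD
  have : ‖f x - auxFhat F hF f hf (e x)‖ = 0 := by
    by_contra hne
    have hpos : 0 < ‖f x - auxFhat F hF f hf (e x)‖ :=
      lt_of_le_of_ne (norm_nonneg _) (Ne.symm hne)
    linarith [key (‖f x - auxFhat F hF f hf (e x)‖ / 2) (by linarith)]
  have h0 := norm_eq_zero.1 this
  have := sub_eq_zero.1 h0
  exact this.symm

end Fhat

section IdealAux

theorem aux_one_sub_pow_mem {R : Type*} [CommRing R] (I : Ideal R) {b : R} (hb : b ∈ I)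
    (N : ℕ) : 1 - (1 - b) ^ N ∈ I := by
  induction N with
  | zero => simpa using I.zero_mem
  | succ n ih =>
    have h : 1 - (1 - b) ^ (n + 1) = (1 - (1 - b) ^ n) + (1 - b) ^ n * b := by ring
    rw [h]
    exact I.add_mem ih (I.mul_mem_left _ hb)

variable {F : StarSubalgebra ℂ (BoundedContinuousFunction X ℂ)} {I : Ideal F}

theorem aux_sq_val (g : F) (x : X) :
    ((star g * g : F) : BoundedContinuousFunction X ℂ) x
      = ((‖(g : BoundedContinuousFunction X ℂ) x‖ ^ 2 : ℝ) : ℂ) := by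
  have h1 : ((star g * g : F) : BoundedContinuousFunction X ℂ)
      = star (g : BoundedContinuousFunction X ℂ) * (g : BoundedContinuousFunction X ℂ) := by
    push_cast
    rfl
  rw [h1]
  have h2 : (star (g : BoundedContinuousFunction X ℂ)
      * (g : BoundedContinuousFunction X ℂ)) x
      = (starRingEnd ℂ) ((g : BoundedContinuousFunction X ℂ) x)
        * (g : BoundedContinuousFunction X ℂ) x := by simp
  rw [h2, Complex.conj_mul']
  push_cast
  ring

theorem aux_univ_mem_BIdeal : Set.univ ∈ genFilter (BIdeal F I) := by
  refine ⟨XSet ((0 : F) : BoundedContinuousFunction X ℂ) 1,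
    ⟨0, I.zero_mem, 1, one_pos, rfl⟩, Set.subset_univ _⟩

theorem aux_sq_le {a s : ℝ} (ha : 0 ≤ a) (hs : 0 ≤ s) (h : a ^ 2 ≤ s ^ 2) : a ≤ s := by
  nlinarith

theorem aux_phi_inter {S S' : Set X} (hS : S ∈ genFilter (BIdeal F I))
    (hS' : S' ∈ genFilter (BIdeal F I)) : S ∩ S' ∈ genFilter (BIdeal F I) := by
  obtain ⟨T, ⟨g, hg, s, hs, rfl⟩, hTS⟩ := hS
  obtain ⟨T', ⟨g', hg', s', hs', rfl⟩, hTS'⟩ := hS'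
  set k : F := star g * g + star g' * g' with hk
  have hkI : k ∈ I := I.add_mem (I.mul_mem_left _ hg) (I.mul_mem_left _ hg')
  refine ⟨XSet (k : BoundedContinuousFunction X ℂ) (min (s^2) (s'^2)),
    ⟨k, hkI, min (s^2) (s'^2), lt_min (by positivity) (by positivity), rfl⟩, ?_⟩
  intro x hx
  have hkval : (k : BoundedContinuousFunction X ℂ) x
      = ((‖(g : BoundedContinuousFunction X ℂ) x‖ ^ 2
          + ‖(g' : BoundedContinuousFunction X ℂ) x‖ ^ 2 : ℝ) : ℂ) := by
    have : (k : BoundedContinuousFunction X ℂ)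
        = ((star g * g : F) : BoundedContinuousFunction X ℂ)
          + ((star g' * g' : F) : BoundedContinuousFunction X ℂ) := by push_cast; rfl
    rw [this]
    have happ : (((star g * g : F) : BoundedContinuousFunction X ℂ)
        + ((star g' * g' : F) : BoundedContinuousFunction X ℂ)) x
        = ((star g * g : F) : BoundedContinuousFunction X ℂ) x
          + ((star g' * g' : F) : BoundedContinuousFunction X ℂ) x := rfl
    rw [happ, aux_sq_val, aux_sq_val]
    push_cast; ring
  have hx' : ‖(k : BoundedContinuousFunction X ℂ) x‖ ≤ min (s^2) (s'^2) := hx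
  rw [hkval, Complex.norm_real, Real.norm_eq_abs, abs_of_nonneg (by positivity)] at hx'
  constructor
  · refine hTS ?_
    show ‖(g : BoundedContinuousFunction X ℂ) x‖ ≤ s
    refine aux_sq_le (norm_nonneg _) hs.le ?_
    have := min_le_left (s^2) (s'^2)
    nlinarith [sq_nonneg ‖(g' : BoundedContinuousFunction X ℂ) x‖]
  · refine hTS' ?_
    show ‖(g' : BoundedContinuousFunction X ℂ) x‖ ≤ s'
    refine aux_sq_le (norm_nonneg _) hs'.le ?_
    have := min_le_right (s^2) (s'^2)
    nlinarith [sq_nonneg ‖(g : BoundedContinuousFunction X ℂ) x‖]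

theorem aux_witness_phi (hF : IsClosed (F : Set (BoundedContinuousFunction X ℂ)))
    {S : Set X} (hS : S ∈ genFilter (BIdeal F I)) :
    ∃ B ∈ BIdeal F I, ∃ u, u ∈ F ∧ (∀ x ∈ B, u x = 0) ∧ (∀ x ∉ S, u x = 1) := by
  obtain ⟨T, ⟨g, hg, s, hs, rfl⟩, hTS⟩ := hS
  obtain ⟨v, hvF, hv0, hv1⟩ := aux_bump0 F hF g.2 0
    (show (s/2)^2 < s^2 by nlinarith)
  refine ⟨XSet (g : BoundedContinuousFunction X ℂ) (s/2),
    ⟨g, hg, s/2, half_pos hs, rfl⟩, v, hvF, ?_, ?_⟩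
  · intro x hx
    refine hv0 x ?_
    have : ‖(g : BoundedContinuousFunction X ℂ) x‖ ≤ s/2 := hx
    rw [sub_zero]
    nlinarith [norm_nonneg ((g : BoundedContinuousFunction X ℂ) x)]
  · intro x hx
    have hxT : x ∉ XSet (g : BoundedContinuousFunction X ℂ) s := fun h => hx (hTS h)
    have : ¬ ‖(g : BoundedContinuousFunction X ℂ) x‖ ≤ s := hxT
    refine hv1 x ?_
    rw [sub_zero]
    nlinarith [norm_nonneg ((g : BoundedContinuousFunction X ℂ) x)]

end IdealAux

end Aux
set_option maxHeartbeats 1600000 in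
theorem stmt19 (F : StarSubalgebra ℂ (BoundedContinuousFunction X ℂ)) (hF : IsClosed (F : Set (BoundedContinuousFunction X ℂ))) (e : X → Delta F) (he : ∀ x : X, (e x).1 = {A : Set X | A ∈ @nhds X (tauF F) x})
    (I : Ideal F) (hIc : IsClosed (I : Set F)) (hIp : I ≠ ⊤)
    (φ : Set (Set X)) (hφ : φ = genFilter (BIdeal F I)) (f : F) :
    List.TFAE
      [f ∈ I,
       ∀ g : C(Delta F, ℂ), (∀ x : X, (f : BoundedContinuousFunction X ℂ) x = g (e x)) →
         ∀ p ∈ hatF F φ, g p = 0,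
       ∀ r : ℝ, 0 < r → XSet (f : BoundedContinuousFunction X ℂ) r ∈ φ] := by
  subst hφ
  have hfBF : (f : BoundedContinuousFunction X ℂ) ∈ F := f.2
  tfae_have 1 → 3 := by
    intro h1 r hr
    exact ⟨XSet (f : BoundedContinuousFunction X ℂ) r, ⟨f, h1, r, hr, rfl⟩, subset_rfl⟩
  tfae_have 3 → 1 := by
    intro h3
    have key : ∀ ε : ℝ, 0 < ε → ∃ j ∈ I, dist f j ≤ ε := by
      intro ε hε
      obtain ⟨T, ⟨g, hgI, s, hs, rfl⟩, hsub⟩ := h3 ε hε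
      set gB : BoundedContinuousFunction X ℂ := (g : BoundedContinuousFunction X ℂ) with hgB
      set fB : BoundedContinuousFunction X ℂ := (f : BoundedContinuousFunction X ℂ) with hfB
      set s' : ℝ := min s 1 with hs'def
      have hs'0 : 0 < s' := lt_min hs one_pos
      have hs'1 : s' ≤ 1 := min_le_right s 1
      set M2 : ℝ := ‖gB‖^2 + 1 with hM2def
      have hM21 : 1 ≤ M2 := by nlinarith [sq_nonneg ‖gB‖]
      set cc : ℝ := M2⁻¹ with hccdef
      have hccM : cc * M2 = 1 := inv_mul_cancel₀ (by positivity)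
      have hcc0 : 0 < cc := by positivity
      have hcc1 : cc ≤ 1 := by nlinarith
      set θ : ℝ := 1 - cc * s'^2 with hθdef
      have hs'sq : s'^2 ≤ 1 := by nlinarith
      have hθ0 : 0 ≤ θ := by rw [hθdef]; nlinarith
      have hθ1 : θ < 1 := by rw [hθdef]; nlinarith
      obtain ⟨N, hN⟩ : ∃ N : ℕ, ‖fB‖ * θ^N ≤ ε := by
        have htend : Filter.Tendsto (fun n : ℕ => θ^n) Filter.atTop (nhds 0) :=
          tendsto_pow_atTop_nhds_zero_of_lt_one hθ0 hθ1
        have hb : 0 < ε / (‖fB‖ + 1) := by positivity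
        obtain ⟨N, hN⟩ := (htend.eventually (gt_mem_nhds hb)).exists
        refine ⟨N, ?_⟩
        have h1 : 0 ≤ θ^N := pow_nonneg hθ0 N
        have h2 : ‖fB‖ ≤ ‖fB‖ + 1 := by linarith
        calc ‖fB‖ * θ^N ≤ (‖fB‖+1) * (ε/(‖fB‖+1)) :=
              mul_le_mul h2 (le_of_lt hN) h1 (by positivity)
          _ = ε := by field_simp
      set b : F := (cc : ℂ) • (star g * g) with hbdef
      have hbI : b ∈ I := I.smul_of_tower_mem _ (I.mul_mem_left _ hgI)
      set hh : F := 1 - (1 - b)^N with hhdef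
      have hhI : hh ∈ I := aux_one_sub_pow_mem I hbI N
      refine ⟨f * hh, I.mul_mem_left f hhI, ?_⟩
      rw [Subtype.dist_eq, dist_eq_norm]
      have hfj : ((f * hh : F) : BoundedContinuousFunction X ℂ) = fB * (hh : BoundedContinuousFunction X ℂ) := by
        push_cast; rfl
      have hcoe : ((hh : F) : BoundedContinuousFunction X ℂ)
          = 1 - (1 - (b : BoundedContinuousFunction X ℂ))^N := by
        rw [hhdef]; push_cast; ring
      have hdiff : fB - fB * (hh : BoundedContinuousFunction X ℂ)
          = fB * (1 - (b : BoundedContinuousFunction X ℂ))^N := by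
        rw [hcoe]; ring
      rw [hfj, ← hfB, hdiff]
      rw [BoundedContinuousFunction.norm_le hε.le]
      intro x
      have hbval : ((b : F) : BoundedContinuousFunction X ℂ) x = ((cc * ‖gB x‖^2 : ℝ) : ℂ) := by
        have h1 : ((b : F) : BoundedContinuousFunction X ℂ)
            = (cc:ℂ) • ((star g * g : F) : BoundedContinuousFunction X ℂ) := by
          rw [hbdef]; push_cast; rfl
        rw [h1]
        have happ : ((cc:ℂ) • ((star g * g : F) : BoundedContinuousFunction X ℂ)) x
            = (cc:ℂ) * ((star g * g : F) : BoundedContinuousFunction X ℂ) x := by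
          simp [smul_eq_mul]
        rw [happ, aux_sq_val]
        push_cast; ring
      set t : ℝ := ‖gB x‖^2 with htdef
      have ht0 : 0 ≤ t := sq_nonneg _
      have htM : t ≤ ‖gB‖^2 := by
        have := gB.norm_coe_le_norm x
        nlinarith [norm_nonneg (gB x), norm_nonneg gB]
      have hct : cc * t ≤ 1 := by nlinarith
      have happx : (fB * (1 - (b : BoundedContinuousFunction X ℂ))^N) x
          = fB x * ((1 - (b : BoundedContinuousFunction X ℂ)) x)^N := by simp
      have h1bx : (1 - (b : BoundedContinuousFunction X ℂ)) x = ((1 - cc * t : ℝ) : ℂ) := by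
        have h2 : (1 - (b : BoundedContinuousFunction X ℂ)) x
            = 1 - (b : BoundedContinuousFunction X ℂ) x := rfl
        rw [h2, hbval]; push_cast; ring
      have hnorm : ‖(fB * (1 - (b : BoundedContinuousFunction X ℂ))^N) x‖
          = ‖fB x‖ * (1 - cc*t)^N := by
        rw [happx, norm_mul, h1bx, norm_pow, Complex.norm_real, Real.norm_eq_abs,
          abs_of_nonneg (by linarith)]
      rw [hnorm]
      by_cases hcase : ‖gB x‖ ≤ s'
      · have hxX : x ∈ XSet gB s := show ‖gB x‖ ≤ s from le_trans hcase (min_le_left s 1)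
        have hfx : ‖fB x‖ ≤ ε := hsub hxX
        have hle1 : (1 - cc*t)^N ≤ 1 := pow_le_one₀ (by linarith) (by nlinarith)
        nlinarith [norm_nonneg (fB x), pow_nonneg (show (0:ℝ) ≤ 1 - cc*t by linarith) N]
      · push_neg at hcase
        have hts : s'^2 ≤ t := by rw [htdef]; nlinarith
        have hfact : (1 - cc*t)^N ≤ θ^N :=
          pow_le_pow_left₀ (by linarith) (by rw [hθdef]; nlinarith) N
        have hfb : ‖fB x‖ ≤ ‖fB‖ := fB.norm_coe_le_norm x
        calc ‖fB x‖ * (1-cc*t)^N ≤ ‖fB‖ * θ^N :=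
              mul_le_mul hfb hfact (pow_nonneg (by linarith) N) (norm_nonneg _)
          _ ≤ ε := hN
    have hcl : f ∈ closure (I : Set F) := by
      rw [Metric.mem_closure_iff]
      intro ε hε
      obtain ⟨j, hj, hd⟩ := key (ε/2) (by linarith)
      exact ⟨j, hj, lt_of_le_of_lt hd (by linarith)⟩
    rw [hIc.closure_eq] at hcl
    exact hcl
  tfae_have 3 → 2 := by
    intro h3 g hg p hp
    have hsmall : ∀ ε : ℝ, 0 < ε → ‖g p‖ < 2*ε := by
      intro ε hε
      have hU : IsOpen (⇑g ⁻¹' Metric.ball (g p) ε) :=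
        g.continuous.isOpen_preimage _ Metric.isOpen_ball
      have hpU : p ∈ ⇑g ⁻¹' Metric.ball (g p) ε := by
        simp [Metric.mem_ball_self hε]
      obtain ⟨V, ⟨A, rfl⟩, hpV, hVU⟩ := aux_basis.exists_subset_of_mem_open hpU hU
      have hXf : XSet (f : BoundedContinuousFunction X ℂ) ε ∈ p.1 := hp (h3 ε hε)
      have hA : A ∈ p.1 := hpV
      have hA' : A ∩ XSet (f : BoundedContinuousFunction X ℂ) ε ∈ p.1 :=
        p.2.1.1.2.1 A hA _ hXf
      have hex : ∃ x : X, A ∩ XSet (f : BoundedContinuousFunction X ℂ) ε ∈ @nhds X (tauF F) x := by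
        by_cases hu : A ∩ XSet (f : BoundedContinuousFunction X ℂ) ε = Set.univ
        · obtain ⟨x⟩ := ‹Nonempty X›
          exact ⟨x, by rw [hu]; exact Filter.univ_mem⟩
        · obtain ⟨B, hB, u, huF, hu0, hu1⟩ := p.2.1.2.2.2 _ hA' hu
          obtain ⟨x, hxB⟩ := p.2.1.2.2.1 B hB
          refine ⟨x, ?_⟩
          have hVopen := aux_cont_preimage_open (tauF F) (aux_tauF_continuous huF)
            (Metric.ball (0:ℂ) 1) Metric.isOpen_ball
          have hxV : x ∈ (fun y => u y) ⁻¹' Metric.ball (0:ℂ) 1 := by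
            show u x ∈ Metric.ball (0:ℂ) 1
            simp [hu0 x hxB]
          refine aux_open_mem_nhds (tauF F) hVopen hxV ?_
          intro y hy
          by_contra hyn
          have h1 := hu1 y hyn
          have h2 : u y ∈ Metric.ball (0:ℂ) 1 := hy
          rw [Metric.mem_ball, h1] at h2
          simp at h2
      obtain ⟨x, hx⟩ := hex
      have hxA' : x ∈ A ∩ XSet (f : BoundedContinuousFunction X ℂ) ε :=
        @mem_of_mem_nhds X (tauF F) _ _ hx
      have heA : e x ∈ hatSet F A := by
        show A ∈ (e x).1
        rw [he x]
        exact Filter.mem_of_superset hx Set.inter_subset_left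
      have hgx := hVU heA
      have hdist : dist (g (e x)) (g p) < ε := hgx
      have hfx : ‖(f : BoundedContinuousFunction X ℂ) x‖ ≤ ε := hxA'.2
      have hgex : g (e x) = (f : BoundedContinuousFunction X ℂ) x := (hg x).symm
      calc ‖g p‖ = ‖(g p - g (e x)) + g (e x)‖ := by ring_nf
        _ ≤ ‖g p - g (e x)‖ + ‖g (e x)‖ := norm_add_le _ _
        _ < ε + ε := by
            refine add_lt_add_of_lt_of_le ?_ ?_
            · rw [← dist_eq_norm, dist_comm]; exact hdist
            · rw [hgex]; exact hfx
        _ = 2*ε := by ring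
    by_contra hne
    have hpos : 0 < ‖g p‖ := norm_pos_iff.2 hne
    have := hsmall (‖g p‖/4) (by linarith)
    linarith
  tfae_have 2 → 3 := by
    intro h2 r hr
    by_contra hnot
    set fB : BoundedContinuousFunction X ℂ := (f : BoundedContinuousFunction X ℂ) with hfB
    set Y : ℝ → Set X := fun t => {x : X | t ≤ ‖fB x‖} with hYdef
    set ℬ : Set (Set X) :=
      {T | ∃ S ∈ genFilter (BIdeal F I), ∃ t : ℝ, 0 < t ∧ t < r ∧ T = S ∩ Y t} with hℬ
    have hBne : ∀ T ∈ ℬ, T.Nonempty := by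
      rintro T ⟨S, hS, t, ht0, htr, rfl⟩
      obtain ⟨S₀, hS₀B, hS₀S⟩ := hS
      obtain ⟨g0, hg0, s0, hs0, rfl⟩ := hS₀B
      rcases (XSet (g0 : BoundedContinuousFunction X ℂ) s0 ∩ Y t).eq_empty_or_nonempty with hem | hne
      · exfalso
        apply hnot
        refine ⟨XSet (g0 : BoundedContinuousFunction X ℂ) s0, ⟨g0, hg0, s0, hs0, rfl⟩, ?_⟩
        intro x hx
        have hxY : x ∉ Y t := fun hY' => Set.eq_empty_iff_forall_notMem.1 hem x ⟨hx, hY'⟩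
        have hlt : ¬ t ≤ ‖fB x‖ := hxY
        show ‖fB x‖ ≤ r
        push_neg at hlt; linarith
      · obtain ⟨x, hx1, hx2⟩ := hne
        exact ⟨x, hS₀S hx1, hx2⟩
    have honeB : ∀ T ∈ ℬ, T ∈ genFilter ℬ := fun T hT => ⟨T, hT, subset_rfl⟩
    have hYuniv : Set.univ ∩ Y (r/2) ∈ genFilter ℬ :=
      honeB _ ⟨Set.univ, aux_univ_mem_BIdeal, r/2, half_pos hr, half_lt_self hr, rfl⟩
    have hψ : FFilter F (genFilter ℬ) := by
      constructor
      · refine ⟨⟨Set.univ ∩ Y (r/2), hYuniv⟩, ?_, ?_, ?_⟩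
        · rintro T ⟨T₁, ⟨S, hS, t, ht0, htr, rfl⟩, hT1⟩ T' ⟨T₂, ⟨S', hS', t', ht0', htr', rfl⟩, hT2⟩
          refine ⟨(S ∩ S') ∩ Y (max t t'),
            ⟨S ∩ S', aux_phi_inter hS hS', max t t', lt_max_of_lt_left ht0, max_lt htr htr', rfl⟩, ?_⟩
          rintro x ⟨⟨hxS, hxS'⟩, hxY⟩
          have hxY' : max t t' ≤ ‖fB x‖ := hxY
          exact ⟨hT1 ⟨hxS, le_trans (le_max_left _ _) hxY'⟩,
            hT2 ⟨hxS', le_trans (le_max_right _ _) hxY'⟩⟩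
        · rintro T ⟨S, hS, hTS⟩ B hTB
          exact ⟨S, hS, hTS.trans hTB⟩
        · rintro ⟨S, hS, hTS⟩
          obtain ⟨x, hx⟩ := hBne S hS
          exact hTS hx
      · refine ⟨⟨Set.univ ∩ Y (r/2), hYuniv⟩, ?_, ?_⟩
        · rintro T ⟨S, hS, hTS⟩
          obtain ⟨x, hx⟩ := hBne S hS
          exact ⟨x, hTS hx⟩
        · rintro T ⟨T₁, ⟨S, hS, t, ht0, htr, rfl⟩, hT1⟩ hTne
          obtain ⟨B₀, hB₀, u, huF, hu0, hu1⟩ := aux_witness_phi hF hS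
          set t'' : ℝ := (t + r)/2 with ht''def
          have htt'' : t < t'' := by rw [ht''def]; linarith
          have ht''r : t'' < r := by rw [ht''def]; linarith
          obtain ⟨v, hvF, hv0, hv1⟩ := aux_bump1 F hF (f := fB) f.2 0
            (show t^2 < t''^2 by nlinarith)
          obtain ⟨w, hwF, hw0, hw1⟩ := aux_combine F huF hvF
          have hB₀φ : B₀ ∈ genFilter (BIdeal F I) := ⟨B₀, hB₀, subset_rfl⟩
          refine ⟨B₀ ∩ Y t'', honeB _ ⟨B₀, hB₀φ, t'', lt_trans ht0 htt'', ht''r, rfl⟩,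
            w, hwF, ?_, ?_⟩
          · rintro x ⟨hxB, hxY⟩
            refine hw0 x (hu0 x hxB) (hv0 x ?_)
            have hxY' : t'' ≤ ‖fB x‖ := hxY
            rw [sub_zero]
            nlinarith [norm_nonneg (fB x), lt_trans ht0 htt'']
          · intro x hxT
            have hxS : x ∉ S ∩ Y t := fun h => hxT (hT1 h)
            rcases not_and_or.1 hxS with h | h
            · exact hw1 x (Or.inl (hu1 x h))
            · refine hw1 x (Or.inr (hv1 x ?_))
              have hlt : ¬ t ≤ ‖fB x‖ := h
              push_neg at hlt
              rw [sub_zero]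
              nlinarith [norm_nonneg (fB x)]
    have hφsub : genFilter (BIdeal F I) ⊆ genFilter ℬ := fun S hS =>
      ⟨S ∩ Y (r/2), ⟨S, hS, r/2, half_pos hr, half_lt_self hr, rfl⟩, Set.inter_subset_left⟩
    obtain ⟨q, hqu, hqsub⟩ := aux_exists_ultra hψ
    set P : Delta F := ⟨q, hqu⟩ with hPdef
    have hPφ : P ∈ hatF F (genFilter (BIdeal F I)) := fun S hS => hqsub (hφsub hS)
    set G : C(Delta F, ℂ) := ⟨auxFhat F hF fB f.2, auxFhat_cont F hF fB f.2⟩ with hGdef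
    have hagree : ∀ x : X, fB x = G (e x) := fun x => (auxFhat_eval F hF fB f.2 e he x).symm
    have hzero : G P = 0 := h2 G hagree P hPφ
    have hfhat : auxFhat F hF fB f.2 P = 0 := hzero
    have hD : {x : X | ‖fB x - auxFhat F hF fB f.2 P‖ ≤ r/4} ∈ q :=
      auxFhat_spec F hF fB f.2 P (r/4) (by linarith)
    rw [hfhat] at hD
    have hYq : Y (r/2) ∈ q :=
      hqsub ⟨Set.univ ∩ Y (r/2),
        ⟨Set.univ, aux_univ_mem_BIdeal, r/2, half_pos hr, half_lt_self hr, rfl⟩,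
        Set.inter_subset_right⟩
    have hint : {x : X | ‖fB x - 0‖ ≤ r/4} ∩ Y (r/2) ∈ q := hqu.1.1.2.1 _ hD _ hYq
    obtain ⟨x, hx1, hx2⟩ := hqu.1.2.2.1 _ hint
    have h1 : ‖fB x - 0‖ ≤ r/4 := hx1
    have h2' : r/2 ≤ ‖fB x‖ := hx2
    rw [sub_zero] at h1
    linarith
  tfae_finish
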